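/- For x ≠ 0, the Airy function satisfies Ai(w) = (1/(wπ)) ∫_0^∞ e^{−z} e^{−(3z)^{1/3} w/2} sin((3^{5/6}/2) z^{1/3} w) dz, where Ai(w) = (3^{−2/3}/π) ∑_{k≥0} (3^{1/3} w)^k sin(2π(k+1)/3) Γ((k+1)/3)/k!. -/

import Mathlib

open Real MeasureTheory
open scoped ENNReal

/-- The Airy function defined by its everywhere-convergent power series. -/
noncomputable def airyAi (w : ℝ) : ℝ :=
  (3 ^ (-(2:ℝ)/3) / Real.pi) *
    ∑' k : ℕ, (3 ^ ((1:ℝ)/3) * w) ^ k * Real.sin (2 * Real.pi * (k + 1) / 3) *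
      Real.Gamma ((k + 1) / 3) / (Nat.factorial k)

/-- Terms of the series expansion of the integrand. -/
noncomputable def airyF (w : ℝ) (k : ℕ) (z : ℝ) : ℝ :=
  Real.sin (2 * Real.pi / 3 * k) * (3 ^ ((1:ℝ)/3) * w) ^ k / (Nat.factorial k) *
    (Real.exp (-z) * z ^ ((k:ℝ)/3))

lemma airy_im_series (u : ℝ) :
    Real.exp (-u / 2) * Real.sin (Real.sqrt 3 / 2 * u)
      = ∑' k : ℕ, u ^ k * Real.sin (2 * Real.pi / 3 * k) / (Nat.factorial k) := by
  set c : ℂ := (u : ℂ) * Complex.exp ((2 * Real.pi / 3 : ℝ) * Complex.I) with hc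
  have hsum : Summable fun k : ℕ => c ^ k / (Nat.factorial k : ℂ) :=
    NormedSpace.expSeries_div_summable c
  have hexp : Complex.exp c = ∑' k : ℕ, c ^ k / (Nat.factorial k : ℂ) := by
    rw [Complex.exp_eq_exp_ℂ, NormedSpace.exp_eq_tsum_div]
  have hcos : Real.cos (2 * Real.pi / 3) = -(1/2) := by
    have h : 2 * Real.pi / 3 = Real.pi - Real.pi / 3 := by ring
    rw [h, Real.cos_pi_sub, Real.cos_pi_div_three]
  have hsin : Real.sin (2 * Real.pi / 3) = Real.sqrt 3 / 2 := by
    have h : 2 * Real.pi / 3 = Real.pi - Real.pi / 3 := by ring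
    rw [h, Real.sin_pi_sub, Real.sin_pi_div_three]
  have hcval : c = ((-u / 2 : ℝ) : ℂ) + ((Real.sqrt 3 / 2 * u : ℝ) : ℂ) * Complex.I := by
    rw [hc, Complex.exp_mul_I, ← Complex.ofReal_cos, ← Complex.ofReal_sin, hcos, hsin]
    push_cast
    ring
  have him : (Complex.exp c).im = Real.exp (-u / 2) * Real.sin (Real.sqrt 3 / 2 * u) := by
    rw [hcval, Complex.exp_add, ← Complex.ofReal_exp, Complex.mul_im, Complex.ofReal_re,
      Complex.ofReal_im, Complex.exp_ofReal_mul_I_im, Complex.exp_ofReal_mul_I_re]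
    ring
  have hterm : ∀ k : ℕ, (c ^ k / (Nat.factorial k : ℂ)).im
      = u ^ k * Real.sin (2 * Real.pi / 3 * k) / (Nat.factorial k) := by
    intro k
    have h1 : c ^ k / (Nat.factorial k : ℂ)
        = ((u ^ k / Nat.factorial k : ℝ) : ℂ)
            * Complex.exp (((2 * Real.pi / 3 * k : ℝ) : ℂ) * Complex.I) := by
      rw [hc, mul_pow, ← Complex.exp_nat_mul]
      have h2 : (k : ℂ) * (((2 * Real.pi / 3 : ℝ) : ℂ) * Complex.I)
          = ((2 * Real.pi / 3 * k : ℝ) : ℂ) * Complex.I := by push_cast; ring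
      rw [h2]
      push_cast
      ring
    rw [h1, Complex.mul_im, Complex.ofReal_re, Complex.ofReal_im,
      Complex.exp_ofReal_mul_I_im, Complex.exp_ofReal_mul_I_re]
    ring
  calc Real.exp (-u / 2) * Real.sin (Real.sqrt 3 / 2 * u)
      = (Complex.exp c).im := him.symm
    _ = ∑' k : ℕ, (c ^ k / (Nat.factorial k : ℂ)).im := by
        rw [hexp, Complex.im_tsum hsum]
    _ = _ := tsum_congr hterm

lemma airy_pointwise (w : ℝ) {z : ℝ} (hz : 0 < z) :
    Real.exp (-z) * Real.exp (-(3 * z) ^ ((1:ℝ)/3) * w / 2) *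
        Real.sin (3 ^ ((5:ℝ)/6) / 2 * z ^ ((1:ℝ)/3) * w)
      = ∑' k : ℕ, airyF w k z := by
  have h3 : (3 * z) ^ ((1:ℝ)/3) = 3 ^ ((1:ℝ)/3) * z ^ ((1:ℝ)/3) :=
    Real.mul_rpow (by norm_num) hz.le
  have hsq : Real.sqrt 3 = 3 ^ ((1:ℝ)/2) := Real.sqrt_eq_rpow 3
  have h56 : (3:ℝ) ^ ((1:ℝ)/2) * 3 ^ ((1:ℝ)/3) = 3 ^ ((5:ℝ)/6) := by
    rw [← Real.rpow_add (by norm_num : (0:ℝ) < 3)]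
    norm_num
  have hs : Real.sqrt 3 / 2 * ((3 * z) ^ ((1:ℝ)/3) * w)
      = 3 ^ ((5:ℝ)/6) / 2 * z ^ ((1:ℝ)/3) * w := by
    rw [h3, hsq, ← h56]; ring
  have hneg : -(3 * z) ^ ((1:ℝ)/3) * w / 2 = -((3 * z) ^ ((1:ℝ)/3) * w) / 2 := by ring
  rw [hneg, ← hs, mul_assoc, airy_im_series ((3 * z) ^ ((1:ℝ)/3) * w), ← tsum_mul_left]
  refine tsum_congr fun k => ?_
  have hzk : (z ^ ((1:ℝ)/3)) ^ k = z ^ ((k:ℝ)/3) := by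
    rw [← Real.rpow_natCast (z ^ ((1:ℝ)/3)) k, ← Real.rpow_mul hz.le]
    congr 1
    ring
  have hu : ((3 * z) ^ ((1:ℝ)/3) * w) ^ k = (3 ^ ((1:ℝ)/3) * w) ^ k * z ^ ((k:ℝ)/3) := by
    rw [h3, ← hzk]; ring
  unfold airyF
  rw [hu]
  ring

lemma airy_cont_rpow {q : ℝ} (hq : 0 ≤ q) : Continuous fun z : ℝ => z ^ q :=
  continuous_iff_continuousAt.2 fun x => Real.continuousAt_rpow_const x q (Or.inr hq)

lemma airyF_cont (w : ℝ) (k : ℕ) : Continuous (airyF w k) := by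
  unfold airyF
  exact continuous_const.mul ((Real.continuous_exp.comp continuous_neg).mul
    (airy_cont_rpow (by positivity)))

lemma airyF_integral (w : ℝ) (k : ℕ) :
    ∫ z in Set.Ioi (0:ℝ), airyF w k z
      = Real.sin (2 * Real.pi / 3 * k) * (3 ^ ((1:ℝ)/3) * w) ^ k / (Nat.factorial k) *
          Real.Gamma ((k:ℝ)/3 + 1) := by
  unfold airyF
  rw [MeasureTheory.integral_const_mul]
  congr 1
  rw [Real.Gamma_eq_integral (by positivity : (0:ℝ) < (k:ℝ)/3 + 1)]
  refine setIntegral_congr_fun measurableSet_Ioi fun z _ => ?_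
  norm_num

lemma airy_zk {z : ℝ} (hz : 0 ≤ z) (b : ℝ) (k : ℕ) :
    (b * z ^ ((1:ℝ)/3)) ^ k = b ^ k * z ^ ((k:ℝ)/3) := by
  have hzk : (z ^ ((1:ℝ)/3)) ^ k = z ^ ((k:ℝ)/3) := by
    rw [← Real.rpow_natCast (z ^ ((1:ℝ)/3)) k, ← Real.rpow_mul hz]
    congr 1
    ring
  rw [mul_pow, hzk]

lemma airy_lint_ne_top (w : ℝ) :
    ∑' k : ℕ, ∫⁻ z in Set.Ioi (0:ℝ), ‖airyF w k z‖₊ ≠ ∞ := by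
  set b : ℝ := |3 ^ ((1:ℝ)/3) * w| with hbdef
  have hb : 0 ≤ b := abs_nonneg _
  set K : ℝ := b + b ^ 2 / 2 with hKdef
  have hbound : ∀ k : ℕ, ∫⁻ z in Set.Ioi (0:ℝ), ‖airyF w k z‖₊
      ≤ ∫⁻ z in Set.Ioi (0:ℝ),
          ENNReal.ofReal (b ^ k / (Nat.factorial k) * (Real.exp (-z) * z ^ ((k:ℝ)/3))) := by
    intro k
    refine lintegral_mono_ae (((ae_restrict_mem measurableSet_Ioi)).mono fun z hz => ?_)
    rw [← enorm_eq_nnnorm, ← ofReal_norm]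
    refine ENNReal.ofReal_le_ofReal ?_
    have hz' : (0:ℝ) < z := hz
    have h2 : (0:ℝ) ≤ Real.exp (-z) * z ^ ((k:ℝ)/3) :=
      mul_nonneg (Real.exp_nonneg _) (Real.rpow_nonneg hz'.le _)
    have habs : ‖airyF w k z‖ = |Real.sin (2 * Real.pi / 3 * k)| * b ^ k / (Nat.factorial k) *
        (Real.exp (-z) * z ^ ((k:ℝ)/3)) := by
      unfold airyF
      rw [Real.norm_eq_abs, abs_mul, abs_div, abs_mul, abs_pow, Nat.abs_cast, abs_of_nonneg h2]
    rw [habs]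
    have h1 : |Real.sin (2 * Real.pi / 3 * k)| ≤ 1 :=
      abs_le.mpr ⟨Real.neg_one_le_sin _, Real.sin_le_one _⟩
    have h3 : (0:ℝ) ≤ b ^ k / (Nat.factorial k) := by positivity
    calc |Real.sin (2 * Real.pi / 3 * k)| * b ^ k / (Nat.factorial k) *
          (Real.exp (-z) * z ^ ((k:ℝ)/3))
        ≤ 1 * b ^ k / (Nat.factorial k) * (Real.exp (-z) * z ^ ((k:ℝ)/3)) := by gcongr
      _ = b ^ k / (Nat.factorial k) * (Real.exp (-z) * z ^ ((k:ℝ)/3)) := by ring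
  have hswap : ∑' k : ℕ, ∫⁻ z in Set.Ioi (0:ℝ),
        ENNReal.ofReal (b ^ k / (Nat.factorial k) * (Real.exp (-z) * z ^ ((k:ℝ)/3)))
      = ∫⁻ z in Set.Ioi (0:ℝ), ∑' k : ℕ,
        ENNReal.ofReal (b ^ k / (Nat.factorial k) * (Real.exp (-z) * z ^ ((k:ℝ)/3))) := by
    refine (lintegral_tsum fun k => ?_).symm
    exact (Measurable.ennreal_ofReal (by
      exact (measurable_const.mul ((Real.continuous_exp.comp continuous_neg).mul
        (airy_cont_rpow (by positivity))).measurable))).aemeasurable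
  have hsum : ∀ z ∈ Set.Ioi (0:ℝ), ∑' k : ℕ,
        ENNReal.ofReal (b ^ k / (Nat.factorial k) * (Real.exp (-z) * z ^ ((k:ℝ)/3)))
      = ENNReal.ofReal (Real.exp (-z) * Real.exp (b * z ^ ((1:ℝ)/3))) := by
    intro z hz
    have hz' : (0:ℝ) < z := hz
    have hterm : ∀ k : ℕ, b ^ k / (Nat.factorial k) * (Real.exp (-z) * z ^ ((k:ℝ)/3))
        = Real.exp (-z) * ((b * z ^ ((1:ℝ)/3)) ^ k / (Nat.factorial k)) := by
      intro k
      rw [airy_zk hz'.le]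
      ring
    have hsumm : Summable fun k : ℕ =>
        b ^ k / (Nat.factorial k) * (Real.exp (-z) * z ^ ((k:ℝ)/3)) := by
      simp_rw [hterm]
      exact (NormedSpace.expSeries_div_summable (b * z ^ ((1:ℝ)/3))).mul_left _
    have hnn : ∀ k : ℕ, 0 ≤ b ^ k / (Nat.factorial k) * (Real.exp (-z) * z ^ ((k:ℝ)/3)) := by
      intro k
      have : (0:ℝ) ≤ z ^ ((k:ℝ)/3) := Real.rpow_nonneg hz'.le _
      positivity
    rw [← ENNReal.ofReal_tsum_of_nonneg hnn hsumm]
    congr 1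
    have hexp : Real.exp (b * z ^ ((1:ℝ)/3))
        = ∑' k : ℕ, (b * z ^ ((1:ℝ)/3)) ^ k / (Nat.factorial k) := by
      rw [Real.exp_eq_exp_ℝ, NormedSpace.exp_eq_tsum_div]
    rw [hexp, ← tsum_mul_left]
    exact tsum_congr hterm
  have hmaj : ∀ z ∈ Set.Ioi (0:ℝ), Real.exp (-z) * Real.exp (b * z ^ ((1:ℝ)/3))
      ≤ Real.exp K * Real.exp (-(1/2) * z) := by
    intro z hz
    have hz' : (0:ℝ) < z := hz
    have h13 : z ^ ((1:ℝ)/3) ≤ 1 + z ^ ((1:ℝ)/2) := by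
      rcases le_total z 1 with h | h
      · have h5 : (0:ℝ) ≤ z ^ ((1:ℝ)/2) := Real.rpow_nonneg hz'.le _
        linarith [Real.rpow_le_one hz'.le h (by norm_num : (0:ℝ) ≤ 1/3)]
      · have := Real.rpow_le_rpow_of_exponent_le h (by norm_num : (1:ℝ)/3 ≤ 1/2)
        linarith
    have hsqrt : b * z ^ ((1:ℝ)/2) ≤ z / 2 + b ^ 2 / 2 := by
      rw [← Real.sqrt_eq_rpow]
      nlinarith [sq_nonneg (Real.sqrt z - b), Real.sq_sqrt hz'.le, Real.sqrt_nonneg z]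
    have hkey : b * z ^ ((1:ℝ)/3) ≤ K + z / 2 := by
      have h4 : b * z ^ ((1:ℝ)/3) ≤ b * (1 + z ^ ((1:ℝ)/2)) :=
        mul_le_mul_of_nonneg_left h13 hb
      have h6 : b * (1 + z ^ ((1:ℝ)/2)) = b + b * z ^ ((1:ℝ)/2) := by ring
      rw [hKdef]
      nlinarith
    rw [← Real.exp_add, ← Real.exp_add]
    exact Real.exp_le_exp.2 (by linarith)
  have hInt : IntegrableOn (fun z : ℝ => Real.exp K * Real.exp (-(1/2) * z))
      (Set.Ioi (0:ℝ)) :=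
    (exp_neg_integrableOn_Ioi 0 (by norm_num : (0:ℝ) < 1/2)).const_mul _
  have hfin : ∫⁻ z in Set.Ioi (0:ℝ),
      ENNReal.ofReal (Real.exp (-z) * Real.exp (b * z ^ ((1:ℝ)/3))) < ∞ := by
    calc ∫⁻ z in Set.Ioi (0:ℝ), ENNReal.ofReal (Real.exp (-z) * Real.exp (b * z ^ ((1:ℝ)/3)))
        ≤ ∫⁻ z in Set.Ioi (0:ℝ), ENNReal.ofReal (Real.exp K * Real.exp (-(1/2) * z)) := by
          refine lintegral_mono_ae (((ae_restrict_mem measurableSet_Ioi)).mono fun z hz => ?_)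
          exact ENNReal.ofReal_le_ofReal (hmaj z hz)
      _ < ∞ := by
          rw [← hasFiniteIntegral_iff_ofReal (ae_of_all _ fun z => by positivity)]
          exact hInt.2
  refine ne_top_of_lt (?_ : _ < ∞)
  calc ∑' k : ℕ, ∫⁻ z in Set.Ioi (0:ℝ), ‖airyF w k z‖₊
      ≤ ∑' k : ℕ, ∫⁻ z in Set.Ioi (0:ℝ),
          ENNReal.ofReal (b ^ k / (Nat.factorial k) * (Real.exp (-z) * z ^ ((k:ℝ)/3))) :=
        ENNReal.tsum_le_tsum hbound
    _ = ∫⁻ z in Set.Ioi (0:ℝ), ∑' k : ℕ,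
          ENNReal.ofReal (b ^ k / (Nat.factorial k) * (Real.exp (-z) * z ^ ((k:ℝ)/3))) := hswap
    _ = ∫⁻ z in Set.Ioi (0:ℝ),
          ENNReal.ofReal (Real.exp (-z) * Real.exp (b * z ^ ((1:ℝ)/3))) :=
        setLIntegral_congr_fun measurableSet_Ioi hsum
    _ < ∞ := hfin

lemma airy_term (w : ℝ) (k : ℕ) :
    ∫ z in Set.Ioi (0:ℝ), airyF w (k + 1) z
      = (w * 3 ^ (-(2:ℝ)/3)) *
        ((3 ^ ((1:ℝ)/3) * w) ^ k * Real.sin (2 * Real.pi * ((k:ℝ) + 1) / 3) *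
          Real.Gamma (((k:ℝ) + 1) / 3) / (Nat.factorial k)) := by
  rw [airyF_integral]
  have h33 : (3:ℝ) ^ ((1:ℝ)/3) = 3 * 3 ^ (-(2:ℝ)/3) := by
    rw [show (1:ℝ)/3 = 1 + -(2:ℝ)/3 by norm_num, Real.rpow_add (by norm_num), Real.rpow_one]
  have hk1 : ((k:ℝ) + 1) ≠ 0 := by positivity
  have hkf : ((Nat.factorial k : ℝ)) ≠ 0 := by positivity
  push_cast [Nat.factorial_succ, pow_succ]
  rw [show ((k:ℝ) + 1) / 3 + 1 = ((k:ℝ) + 1) / 3 + 1 from rfl]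
  rw [Real.Gamma_add_one (by positivity : ((k:ℝ) + 1) / 3 ≠ 0)]
  rw [show 2 * Real.pi / 3 * ((k:ℝ) + 1) = 2 * Real.pi * ((k:ℝ) + 1) / 3 by ring]
  rw [h33]
  field_simp

theorem airy_integral_rep (w : ℝ) (hw : w ≠ 0) :
    airyAi w = (1 / (w * Real.pi)) *
      ∫ z in Set.Ioi (0:ℝ),
        Real.exp (-z) * Real.exp (-(3 * z) ^ ((1:ℝ)/3) * w / 2) *
          Real.sin (3 ^ ((5:ℝ)/6) / 2 * z ^ ((1:ℝ)/3) * w) := by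
  have hne := airy_lint_ne_top w
  have hmeas : ∀ k : ℕ, AEStronglyMeasurable (airyF w k)
      (volume.restrict (Set.Ioi (0:ℝ))) := fun k => (airyF_cont w k).aestronglyMeasurable
  have hIcongr : (∫ z in Set.Ioi (0:ℝ),
        Real.exp (-z) * Real.exp (-(3 * z) ^ ((1:ℝ)/3) * w / 2) *
          Real.sin (3 ^ ((5:ℝ)/6) / 2 * z ^ ((1:ℝ)/3) * w))
      = ∫ z in Set.Ioi (0:ℝ), ∑' k : ℕ, airyF w k z :=
    setIntegral_congr_fun measurableSet_Ioi fun z hz => airy_pointwise w hz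
  have hint : ∫ z in Set.Ioi (0:ℝ), ∑' k : ℕ, airyF w k z
      = ∑' k : ℕ, ∫ z in Set.Ioi (0:ℝ), airyF w k z :=
    MeasureTheory.integral_tsum hmeas hne
  have hsumA : Summable fun k : ℕ => ∫ z in Set.Ioi (0:ℝ), airyF w k z := by
    refine Summable.of_norm_bounded
      (g := fun k => (∫⁻ z in Set.Ioi (0:ℝ), ‖airyF w k z‖₊).toReal)
      (ENNReal.summable_toReal hne) fun k => ?_
    have h := MeasureTheory.norm_integral_le_lintegral_norm
      (μ := volume.restrict (Set.Ioi (0:ℝ))) (airyF w k)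
    simpa [← enorm_eq_nnnorm, ← ofReal_norm, Real.norm_eq_abs] using h
  have hA0 : ∫ z in Set.Ioi (0:ℝ), airyF w 0 z = 0 := by
    rw [airyF_integral]
    simp
  rw [hIcongr, hint, hsumA.tsum_eq_zero_add, hA0, zero_add]
  have hshift : ∑' k : ℕ, ∫ z in Set.Ioi (0:ℝ), airyF w (k + 1) z
      = (w * 3 ^ (-(2:ℝ)/3)) *
        ∑' k : ℕ, (3 ^ ((1:ℝ)/3) * w) ^ k * Real.sin (2 * Real.pi * ((k:ℝ) + 1) / 3) *
          Real.Gamma (((k:ℝ) + 1) / 3) / (Nat.factorial k) := by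
    rw [← tsum_mul_left]
    exact tsum_congr fun k => airy_term w k
  rw [hshift]
  unfold airyAi
  have hpi : Real.pi ≠ 0 := Real.pi_ne_zero
  field_simp
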